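/- Let (E_m)_{m≥0} be a sequence of real numbers and set Δ_m = E_m − E_{m−1} for m ≥ 1. Suppose that for all m ≥ 1 with E_m ≥ E_{m+1}, one has E_m ≥ (m E_{m−1} + (m+1) E_{m+1})/(2m+1), i.e. (m+1)Δ_{m+1} ≤ m Δ_m. Fix ℓ ≥ 0 with E_{ℓ+1} ≤ E_ℓ, and suppose E_k ≥ E_{k+1} for all k ≥ ℓ. Then for all m > ℓ one has E_m ≤ E_ℓ + (S_m − S_ℓ)(ℓ+1)(E_{ℓ+1} − E_ℓ), where S_m = Σ_{μ=1}^m 1/μ. -/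

import Mathlib

/-- The `m`-th harmonic number `S_m = Σ_{μ=1}^m 1/μ` (with `S_0 = 0`). -/
noncomputable def harmonic' (m : ℕ) : ℝ := ∑ μ ∈ Finset.range m, 1 / ((μ : ℝ) + 1)

lemma harmonic'_succ (m : ℕ) : harmonic' (m + 1) = harmonic' m + 1 / ((m : ℝ) + 1) := by
  simp [harmonic', Finset.sum_range_succ]

/-- Logarithmic tangential bound in the decreasing part: under the
pseudoconcavity condition `(m+1)Δ_{m+1} ≤ m Δ_m` (whenever `E_m ≥ E_{m+1}`),
and if the sequence is nonincreasing from `ℓ` on with `E_{ℓ+1} ≤ E_ℓ`, then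
`E_m ≤ E_ℓ + (S_m − S_ℓ)(ℓ+1)(E_{ℓ+1} − E_ℓ)` for all `m > ℓ`. -/
theorem tangent_bound_decreasing (E : ℕ → ℝ)
    (hpc : ∀ m : ℕ, 1 ≤ m → E (m + 1) ≤ E m →
      ((m : ℝ) + 1) * (E (m + 1) - E m) ≤ (m : ℝ) * (E m - E (m - 1)))
    (ℓ : ℕ) (hdec0 : E (ℓ + 1) ≤ E ℓ) (hdec : ∀ k : ℕ, ℓ ≤ k → E (k + 1) ≤ E k) :
    ∀ m : ℕ, ℓ < m →
      E m ≤ E ℓ + (harmonic' m - harmonic' ℓ) * ((ℓ : ℝ) + 1) * (E (ℓ + 1) - E ℓ) := by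
  -- key: for k ≥ ℓ, (k+1)(E(k+1)-E k) ≤ (ℓ+1)(E(ℓ+1)-E ℓ)
  have key : ∀ k : ℕ, ℓ ≤ k →
      ((k : ℝ) + 1) * (E (k + 1) - E k) ≤ ((ℓ : ℝ) + 1) * (E (ℓ + 1) - E ℓ) := by
    intro k hk
    induction k, hk using Nat.le_induction with
    | base => exact le_rfl
    | succ n hn ih =>
      have h1 : 1 ≤ n + 1 := Nat.succ_le_succ (Nat.zero_le n)
      have h2 := hpc (n + 1) h1 (hdec (n + 1) (Nat.le_succ_of_le hn))
      have : ((n + 1 : ℕ) : ℝ) * (E (n + 1) - E (n + 1 - 1)) =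
          ((n : ℝ) + 1) * (E (n + 1) - E n) := by
        push_cast [Nat.add_sub_cancel]
        ring
      calc (((n + 1 : ℕ) : ℝ) + 1) * (E ((n + 1) + 1) - E (n + 1))
          ≤ ((n : ℝ) + 1) * (E (n + 1) - E n) := by rw [← this]; exact h2
        _ ≤ ((ℓ : ℝ) + 1) * (E (ℓ + 1) - E ℓ) := ih
  intro m hm
  induction m, hm using Nat.le_induction with
  | base =>
    rw [harmonic'_succ]
    have hpos : ((ℓ : ℝ) + 1) ≠ 0 := by positivity
    field_simp
    ring_nf
    exact le_rfl
  | succ n hn ih =>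
    have hk := key n (Nat.le_of_succ_le hn)
    have hnpos : (0 : ℝ) < (n : ℝ) + 1 := by positivity
    have hstep : E (n + 1) - E n ≤ (1 / ((n : ℝ) + 1)) * (((ℓ : ℝ) + 1) * (E (ℓ + 1) - E ℓ)) := by
      rw [div_mul_eq_mul_div, one_mul, le_div_iff₀ hnpos]
      linarith [hk]
    rw [harmonic'_succ]
    have := ih
    nlinarith [hstep, this]
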